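/- Main result, pure DP version: Let Y be a finite nonempty set of real numbers, let f map partial tuples over X to Y, let ε, β > 0, set t = 2·⌈(2/ε)·log(|Y|/β)⌉, let n ≥ m ≥ t be integers, and let S_1,...,S_k be an (n,m,t)-covering design. Then there exists a randomized algorithm M mapping partial tuples in (X ∪ {⊥})^n to probability distributions on Y such that (i) M is (ε,0)-differentially private with respect to neighbouring partial tuples (those differing in exactly one coordinate, where one of the two differing entries is ⊥), and (ii) for every input x with |x| = n (no null entries), with probability at least 1 − β over the randomness of M, max{ f(x_{[n]∖S_i}) : i ∈ {1,...,k} } ≥ M(x) ≥ min{ f(x_{[n]∖S_i}) : i ∈ {1,...,k} }. -/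

import Mathlib

open scoped Classical

/-- `x_A`: the partial tuple agreeing with `x` on `A` and equal to `⊥` elsewhere. -/
def restrictTuple {X : Type*} {n : ℕ} (x : Fin n → Option X) (A : Finset (Fin n)) :
    Fin n → Option X :=
  fun j => if j ∈ A then x j else none

noncomputable def hdist {n : ℕ} {α : Type*} (x z : Fin n → α) : ℕ :=
  (Finset.univ.filter (fun j => x j ≠ z j)).card

lemma hdist_self {n : ℕ} {α : Type*} (x : Fin n → α) : hdist x x = 0 := by
  simp [hdist]

lemma hdist_comm {n : ℕ} {α : Type*} (x z : Fin n → α) : hdist x z = hdist z x := by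
  unfold hdist
  congr 1
  apply Finset.filter_congr
  intro j _
  simp [ne_comm]

lemma hdist_triangle {n : ℕ} {α : Type*} (x y z : Fin n → α) :
    hdist x z ≤ hdist x y + hdist y z := by
  unfold hdist
  refine le_trans (Finset.card_le_card ?_) (Finset.card_union_le _ _)
  intro j hj
  simp only [Finset.mem_filter, Finset.mem_union, Finset.mem_univ, true_and] at *
  by_contra h
  push_neg at h
  exact hj (h.1.trans h.2)

lemma hdist_le_one {n : ℕ} {α : Type*} {x x' : Fin n → α} (j : Fin n)
    (hj : ∀ j', j' ≠ j → x j' = x' j') : hdist x x' ≤ 1 := by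
  unfold hdist
  refine le_trans (Finset.card_le_card (t := {j}) ?_) (le_of_eq (Finset.card_singleton j))
  intro j' hj'
  simp only [Finset.mem_filter, Finset.mem_singleton, Finset.mem_univ, true_and] at hj' ⊢
  by_contra hne'
  exact hj' (hj j' hne')

lemma card_filter_shift (τ : ℕ) (P Q : ℕ → Prop) (hPQ : ∀ e, P (e + 1) → Q e) :
    ((Finset.range τ).filter P).card ≤ ((Finset.range τ).filter Q).card + 1 := by
  classical
  have hsub : (Finset.range τ).filter P ⊆
      insert 0 (((Finset.range τ).filter Q).image Nat.succ) := by
    intro d hd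
    rw [Finset.mem_filter, Finset.mem_range] at hd
    match d, hd with
    | 0, _ => exact Finset.mem_insert_self _ _
    | (e+1), hd =>
      refine Finset.mem_insert_of_mem (Finset.mem_image.mpr ⟨e, ?_, rfl⟩)
      rw [Finset.mem_filter, Finset.mem_range]
      exact ⟨by omega, hPQ e hd.2⟩
  calc ((Finset.range τ).filter P).card
      ≤ (insert 0 (((Finset.range τ).filter Q).image Nat.succ)).card :=
        Finset.card_le_card hsub
    _ ≤ (((Finset.range τ).filter Q).image Nat.succ).card + 1 := Finset.card_insert_le _ _
    _ ≤ ((Finset.range τ).filter Q).card + 1 :=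
        Nat.add_le_add_right Finset.card_image_le 1

noncomputable def scoreP {X : Type*} {n k : ℕ} (f : (Fin n → Option X) → ℝ)
    (S : Fin k → Finset (Fin n)) (h : (Finset.univ : Finset (Fin k)).Nonempty)
    (τ : ℕ) (x : Fin n → Option X) (y : ℝ) : ℕ :=
  ((Finset.range τ).filter (fun d => ∀ w, hdist x w ≤ d →
     (Finset.univ.inf' h (fun i => f (restrictTuple w (S i)ᶜ)) ≤ y ∧
      y ≤ Finset.univ.sup' h (fun i => f (restrictTuple w (S i)ᶜ))))).card

lemma scoreP_sens {X : Type*} {n k : ℕ} (f : (Fin n → Option X) → ℝ)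
    (S : Fin k → Finset (Fin n)) (h : (Finset.univ : Finset (Fin k)).Nonempty)
    (τ : ℕ) (x x' : Fin n → Option X) (y : ℝ) (hxx' : hdist x x' ≤ 1) :
    scoreP f S h τ x y ≤ scoreP f S h τ x' y + 1 := by
  unfold scoreP
  refine card_filter_shift τ _ _ ?_
  intro e he w hw
  refine he w ?_
  calc hdist x w ≤ hdist x x' + hdist x' w := hdist_triangle _ _ _
    _ ≤ 1 + e := add_le_add hxx' hw
    _ = e + 1 := by omega

lemma scoreP_good {X : Type*} {n k : ℕ} (f : (Fin n → Option X) → ℝ)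
    (S : Fin k → Finset (Fin n)) (h : (Finset.univ : Finset (Fin k)).Nonempty)
    (τ : ℕ) (x : Fin n → Option X) (y : ℝ) (h1 : 1 ≤ scoreP f S h τ x y) :
    Finset.univ.inf' h (fun i => f (restrictTuple x (S i)ᶜ)) ≤ y ∧
    y ≤ Finset.univ.sup' h (fun i => f (restrictTuple x (S i)ᶜ)) := by
  unfold scoreP at h1
  obtain ⟨d, hd⟩ := Finset.card_pos.mp h1
  rw [Finset.mem_filter] at hd
  exact hd.2 x (by rw [hdist_self]; exact Nat.zero_le d)

lemma scoreP_star {X : Type*} {n k t : ℕ} (Y : Finset ℝ) (f : (Fin n → Option X) → ℝ)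
    (hf : ∀ z, f z ∈ Y)
    (S : Fin k → Finset (Fin n)) (h : (Finset.univ : Finset (Fin k)).Nonempty)
    (hcover : ∀ T : Finset (Fin n), T.card ≤ t → ∃ i, T ⊆ S i)
    (τ : ℕ) (ht2 : t = 2 * τ) (x : Fin n → Option X) :
    ∃ y ∈ Y, scoreP f S h τ x y = τ := by
  classical
  have hsupY : ∀ z : Fin n → Option X,
      Finset.univ.sup' h (fun i => f (restrictTuple z (S i)ᶜ)) ∈ Y := by
    intro z
    obtain ⟨i, _, hi⟩ := Finset.exists_mem_eq_sup' h (fun i => f (restrictTuple z (S i)ᶜ))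
    rw [hi]; exact hf _
  set H : Finset ℝ := Y.filter (fun y => ∃ w, hdist x w ≤ τ ∧
      Finset.univ.sup' h (fun i => f (restrictTuple w (S i)ᶜ)) = y) with hH
  have hHx : Finset.univ.sup' h (fun i => f (restrictTuple x (S i)ᶜ)) ∈ H :=
    Finset.mem_filter.mpr ⟨hsupY x, x, by rw [hdist_self]; exact Nat.zero_le _, rfl⟩
  have hHne : H.Nonempty := ⟨_, hHx⟩
  set ystar := H.min' hHne with hystar
  obtain ⟨hyY, w0, hw0, hw0e⟩ := Finset.mem_filter.mp (H.min'_mem hHne)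
  have agree : ∀ w w' : Fin n → Option X, hdist x w ≤ τ → hdist x w' ≤ τ →
      ∃ i, restrictTuple w (S i)ᶜ = restrictTuple w' (S i)ᶜ := by
    intro w w' hw hw'
    have hcc : ((Finset.univ.filter (fun j => x j ≠ w j)) ∪
        (Finset.univ.filter (fun j => x j ≠ w' j))).card ≤ t := by
      refine le_trans (Finset.card_union_le _ _) ?_
      have e1 : (Finset.univ.filter (fun j => x j ≠ w j)).card = hdist x w := by unfold hdist; congr!
      have e2 : (Finset.univ.filter (fun j => x j ≠ w' j)).card = hdist x w' := by unfold hdist; congr!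
      omega
    obtain ⟨i, hT⟩ := hcover _ hcc
    refine ⟨i, funext fun j => ?_⟩
    unfold restrictTuple
    by_cases hj : j ∈ (S i)ᶜ
    · rw [if_pos hj, if_pos hj]
      have hjS : j ∉ S i := Finset.mem_compl.mp hj
      have h1 : x j = w j := by
        by_contra hne
        exact hjS (hT (Finset.mem_union_left _
          (Finset.mem_filter.mpr ⟨Finset.mem_univ _, hne⟩)))
      have h2 : x j = w' j := by
        by_contra hne
        exact hjS (hT (Finset.mem_union_right _
          (Finset.mem_filter.mpr ⟨Finset.mem_univ _, hne⟩)))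
      rw [← h1, ← h2]
    · rw [if_neg hj, if_neg hj]
  have main : ∀ w : Fin n → Option X, hdist x w ≤ τ →
      Finset.univ.inf' h (fun i => f (restrictTuple w (S i)ᶜ)) ≤ ystar ∧
      ystar ≤ Finset.univ.sup' h (fun i => f (restrictTuple w (S i)ᶜ)) := by
    intro w hw
    constructor
    · obtain ⟨i, hi⟩ := agree w w0 hw hw0
      calc Finset.univ.inf' h (fun i => f (restrictTuple w (S i)ᶜ))
          ≤ f (restrictTuple w (S i)ᶜ) :=
            Finset.inf'_le (fun i => f (restrictTuple w (S i)ᶜ)) (Finset.mem_univ i)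
        _ = f (restrictTuple w0 (S i)ᶜ) := by rw [hi]
        _ ≤ Finset.univ.sup' h (fun i => f (restrictTuple w0 (S i)ᶜ)) :=
            Finset.le_sup' (fun i => f (restrictTuple w0 (S i)ᶜ)) (Finset.mem_univ i)
        _ = ystar := hw0e
    · exact Finset.min'_le H _ (Finset.mem_filter.mpr ⟨hsupY w, w, hw, rfl⟩)
  refine ⟨ystar, hyY, ?_⟩
  have hfill : ((Finset.range τ).filter (fun d => ∀ w, hdist x w ≤ d →
     (Finset.univ.inf' h (fun i => f (restrictTuple w (S i)ᶜ)) ≤ ystar ∧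
      ystar ≤ Finset.univ.sup' h (fun i => f (restrictTuple w (S i)ᶜ))))) = Finset.range τ := by
    apply Finset.filter_true_of_mem
    intro d hd w hw
    rw [Finset.mem_range] at hd
    exact main w (le_trans hw (by omega))
  unfold scoreP
  rw [hfill, Finset.card_range]

/-- Generic exponential-mechanism construction. -/
theorem exp_mech {A : Type*} (Y : Finset ℝ) (hY : Y.Nonempty) (ε β : ℝ) (hε : 0 ≤ ε)
    (Nbr : A → A → Prop) (s : A → ℝ → ℕ)
    (hsens : ∀ x x', Nbr x x' → ∀ y, s x y ≤ s x' y + 1 ∧ s x' y ≤ s x y + 1)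
    (G : A → Set ℝ) (τ : ℕ)
    (hgood : ∀ x y, 1 ≤ s x y → y ∈ G x)
    (hstar : ∀ x, ∃ y ∈ Y, s x y = τ)
    (hnum : (Y.card : ℝ) * Real.exp (-(ε/2) * τ) ≤ β) :
    ∃ M : A → PMF ℝ,
      (∀ x, ∀ y ∈ (M x).support, y ∈ Y) ∧
      (∀ x x', Nbr x x' → ∀ V : Set ℝ,
        (M x).toOuterMeasure V ≤ ENNReal.ofReal (Real.exp ε) * (M x').toOuterMeasure V) ∧
      (∀ x, ENNReal.ofReal (1 - β) ≤ (M x).toOuterMeasure (G x)) := by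
  set w : A → ℝ → ENNReal := fun x y => ENNReal.ofReal (Real.exp (ε/2 * s x y)) with hw
  set W : A → ENNReal := fun x => ∑ y ∈ Y, w x y with hW
  have hwpos : ∀ x y, w x y ≠ 0 := by
    intro x y
    simp [hw, ENNReal.ofReal_eq_zero, not_le, Real.exp_pos]
  have hwtop : ∀ x y, w x y ≠ ⊤ := fun x y => ENNReal.ofReal_ne_top
  have hWpos : ∀ x, W x ≠ 0 := by
    intro x
    obtain ⟨y0, hy0⟩ := hY
    exact fun h => hwpos x y0 (Finset.sum_eq_zero_iff.mp h y0 hy0)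
  have hWtop : ∀ x, W x ≠ ⊤ := by
    intro x
    exact (ENNReal.sum_lt_top.mpr (fun y _ => (hwtop x y).lt_top)).ne
  set g : A → ℝ → ENNReal := fun x y => if y ∈ Y then w x y * (W x)⁻¹ else 0 with hg
  have hgsum : ∀ x, ∑ y ∈ Y, g x y = 1 := by
    intro x
    have : ∑ y ∈ Y, g x y = (∑ y ∈ Y, w x y) * (W x)⁻¹ := by
      rw [Finset.sum_mul]
      exact Finset.sum_congr rfl fun y hy => by simp [hg, hy]
    rw [this]
    exact ENNReal.mul_inv_cancel (hWpos x) (hWtop x)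
  set M : A → PMF ℝ := fun x => PMF.ofFinset (g x) Y (hgsum x)
    (fun y hy => by simp [hg, hy]) with hM
  have hMapply : ∀ x y, M x y = g x y := by
    intro x y; simp [hM, PMF.ofFinset_apply]
  refine ⟨M, ?_, ?_, ?_⟩
  · intro x y hy
    by_contra hyY
    rw [PMF.mem_support_iff, hMapply] at hy
    exact hy (by simp [hg, hyY])
  · intro x x' hN V
    have hK0 : ENNReal.ofReal (Real.exp (ε/2)) ≠ 0 := by
      simp [ENNReal.ofReal_eq_zero, not_le, Real.exp_pos]
    have hKtop : ENNReal.ofReal (Real.exp (ε/2)) ≠ ⊤ := ENNReal.ofReal_ne_top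
    set K := ENNReal.ofReal (Real.exp (ε/2)) with hKdef
    have key : ∀ a b : A, (∀ y, s a y ≤ s b y + 1) → ∀ y, w a y ≤ K * w b y := by
      intro a b hab y
      rw [hKdef, ← ENNReal.ofReal_mul (Real.exp_nonneg _), ← Real.exp_add]
      apply ENNReal.ofReal_le_ofReal
      apply (Real.exp_le_exp).mpr
      have h := hab y
      have h' : (s a y : ℝ) ≤ (s b y : ℝ) + 1 := by exact_mod_cast h
      nlinarith
    have h1 : ∀ y, w x y ≤ K * w x' y := key x x' (fun y => (hsens x x' hN y).1)
    have h2 : ∀ y, w x' y ≤ K * w x y := key x' x (fun y => (hsens x x' hN y).2)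
    have hWle : W x' ≤ K * W x := by
      calc W x' = ∑ y ∈ Y, w x' y := rfl
        _ ≤ ∑ y ∈ Y, K * w x y := Finset.sum_le_sum (fun y _ => h2 y)
        _ = K * ∑ y ∈ Y, w x y := (Finset.mul_sum _ _ _).symm
        _ = K * W x := rfl
    have hinv : (W x)⁻¹ ≤ K * (W x')⁻¹ := by
      have h3 : (K * W x)⁻¹ ≤ (W x')⁻¹ := ENNReal.inv_le_inv.mpr hWle
      rw [ENNReal.mul_inv (Or.inl hK0) (Or.inl hKtop)] at h3
      calc (W x)⁻¹ = K * (K⁻¹ * (W x)⁻¹) := by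
            rw [← mul_assoc, ENNReal.mul_inv_cancel hK0 hKtop, one_mul]
        _ ≤ K * (W x')⁻¹ := mul_le_mul_right h3 _
    have hpt : ∀ y, M x y ≤ ENNReal.ofReal (Real.exp ε) * M x' y := by
      intro y
      rw [hMapply, hMapply]
      by_cases hy : y ∈ Y
      · simp only [hg, if_pos hy]
        calc w x y * (W x)⁻¹ ≤ (K * w x' y) * (K * (W x')⁻¹) := mul_le_mul' (h1 y) hinv
          _ = (K * K) * (w x' y * (W x')⁻¹) := by ring
          _ = ENNReal.ofReal (Real.exp ε) * (w x' y * (W x')⁻¹) := by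
              rw [hKdef, ← ENNReal.ofReal_mul (Real.exp_nonneg _), ← Real.exp_add, add_halves]
      · simp [hg, hy]
    calc (M x).toOuterMeasure V = ∑' y, V.indicator (M x) y := (M x).toOuterMeasure_apply V
      _ ≤ ∑' y, V.indicator (fun y => ENNReal.ofReal (Real.exp ε) * M x' y) y := by
          refine ENNReal.tsum_le_tsum (fun y => ?_)
          by_cases hy : y ∈ V
          · simpa [Set.indicator_of_mem hy] using hpt y
          · simp [Set.indicator_of_notMem hy]
      _ = ∑' y, ENNReal.ofReal (Real.exp ε) * V.indicator (M x') y := by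
          refine tsum_congr (fun y => ?_)
          by_cases hy : y ∈ V
          · simp [Set.indicator_of_mem hy]
          · simp [Set.indicator_of_notMem hy]
      _ = ENNReal.ofReal (Real.exp ε) * ∑' y, V.indicator (M x') y := ENNReal.tsum_mul_left
      _ = ENNReal.ofReal (Real.exp ε) * (M x').toOuterMeasure V := by
          rw [(M x').toOuterMeasure_apply V]
  · intro x
    have hβ0 : 0 ≤ β := le_trans (mul_nonneg (Nat.cast_nonneg _) (Real.exp_nonneg _)) hnum
    obtain ⟨ystar, hysY, hys⟩ := hstar x
    have hWge : ENNReal.ofReal (Real.exp (ε/2 * τ)) ≤ W x := by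
      have h := Finset.single_le_sum (f := fun y => w x y) (fun y _ => zero_le) hysY
      calc ENNReal.ofReal (Real.exp (ε/2 * τ)) = w x ystar := by rw [hw]; simp [hys]
        _ ≤ W x := h
    have hbadpt : ∀ y ∈ Y, y ∉ G x → M x y ≤ ENNReal.ofReal (Real.exp (-(ε/2) * τ)) := by
      intro y hy hyG
      have hs0 : s x y = 0 := by
        by_contra h
        exact hyG (hgood x y (Nat.one_le_iff_ne_zero.mpr h))
      rw [hMapply]
      simp only [hg, if_pos hy, hw, hs0, Nat.cast_zero, mul_zero, Real.exp_zero,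
        ENNReal.ofReal_one, one_mul]
      calc (W x)⁻¹ ≤ (ENNReal.ofReal (Real.exp (ε/2 * τ)))⁻¹ := ENNReal.inv_le_inv.mpr hWge
        _ = ENNReal.ofReal (Real.exp (-(ε/2) * τ)) := by
            rw [← ENNReal.ofReal_inv_of_pos (Real.exp_pos _), ← Real.exp_neg]
            congr 1
            ring
    set B := Y.filter (fun y => y ∉ G x) with hBdef
    set Gf := Y.filter (fun y => y ∈ G x) with hGfdef
    have hsplit : ∑ y ∈ Gf, M x y + ∑ y ∈ B, M x y = 1 := by
      rw [hGfdef, hBdef, Finset.sum_filter_add_sum_filter_not]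
      calc ∑ y ∈ Y, M x y = ∑ y ∈ Y, g x y := Finset.sum_congr rfl (fun y _ => hMapply x y)
        _ = 1 := hgsum x
    have hBle : ∑ y ∈ B, M x y ≤ ENNReal.ofReal β := by
      have e1 : ∑ y ∈ B, M x y ≤ ∑ _y ∈ B, ENNReal.ofReal (Real.exp (-(ε/2)*τ)) :=
        Finset.sum_le_sum (fun y hy => by
          rw [hBdef, Finset.mem_filter] at hy; exact hbadpt y hy.1 hy.2)
      have e2 : ∑ _y ∈ B, ENNReal.ofReal (Real.exp (-(ε/2)*τ))
          = (B.card : ENNReal) * ENNReal.ofReal (Real.exp (-(ε/2)*τ)) := by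
        rw [Finset.sum_const, nsmul_eq_mul]
      have e3 : (B.card : ENNReal) * ENNReal.ofReal (Real.exp (-(ε/2)*τ))
          ≤ (Y.card : ENNReal) * ENNReal.ofReal (Real.exp (-(ε/2)*τ)) :=
        mul_le_mul_left (Nat.cast_le.mpr (by rw [hBdef]; exact Finset.card_filter_le _ _)) _
      have e4 : (Y.card : ENNReal) * ENNReal.ofReal (Real.exp (-(ε/2)*τ))
          = ENNReal.ofReal ((Y.card : ℝ) * Real.exp (-(ε/2)*τ)) := by
        rw [ENNReal.ofReal_mul (Nat.cast_nonneg _), ENNReal.ofReal_natCast]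
      exact le_trans e1 (le_trans (e2.le.trans e3) (e4.le.trans (ENNReal.ofReal_le_ofReal hnum)))
    have hBtop : ∑ y ∈ B, M x y ≠ ⊤ := (lt_of_le_of_lt hBle ENNReal.ofReal_lt_top).ne
    have hGfle : ∑ y ∈ Gf, M x y ≤ (M x).toOuterMeasure (G x) := by
      rw [PMF.toOuterMeasure_apply]
      calc ∑ y ∈ Gf, M x y = ∑ y ∈ Gf, (G x).indicator (M x) y :=
            Finset.sum_congr rfl (fun y hy => by
              rw [hGfdef, Finset.mem_filter] at hy
              rw [Set.indicator_of_mem hy.2])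
        _ ≤ ∑' y, (G x).indicator (M x) y := ENNReal.sum_le_tsum _
    rcases le_or_gt 1 β with hβ1 | hβ1
    · rw [ENNReal.ofReal_eq_zero.mpr (by linarith)]; exact zero_le
    · have h4 : ENNReal.ofReal (1 - β) + ∑ y ∈ B, M x y ≤ (∑ y ∈ Gf, M x y) + ∑ y ∈ B, M x y := by
        rw [hsplit]
        calc ENNReal.ofReal (1-β) + ∑ y ∈ B, M x y
            ≤ ENNReal.ofReal (1-β) + ENNReal.ofReal β := add_le_add_right hBle _
          _ = ENNReal.ofReal 1 := by rw [← ENNReal.ofReal_add (by linarith) hβ0]; norm_num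
          _ = 1 := ENNReal.ofReal_one
      exact le_trans ((ENNReal.add_le_add_iff_right hBtop).mp h4) hGfle


/-- Main result, pure DP version: given a function `f` on partial tuples taking values
in a finite nonempty `Y ⊆ ℝ`, `t = 2·⌈(2/ε)·log(|Y|/β)⌉`, integers `n ≥ m ≥ t`, and an
`(n,m,t)`-covering design `S_1,…,S_k`, there is a randomized algorithm `M` that is
`(ε,0)`-differentially private with respect to neighbouring partial tuples (differing in
exactly one coordinate, one of the two differing entries being `⊥`), and for every
input `x` with no null entries, with probability at least `1 − β`,
`max_i f(x_{[n]∖S_i}) ≥ M(x) ≥ min_i f(x_{[n]∖S_i})`. -/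
theorem main_result_pure_dp {X : Type*} (Y : Finset ℝ) (hY : Y.Nonempty)
    {n m t k : ℕ}
    (f : (Fin n → Option X) → ℝ) (hf : ∀ z, f z ∈ Y)
    (ε β : ℝ) (hε : 0 < ε) (hβ : 0 < β)
    (ht : (t : ℤ) = 2 * ⌈2 / ε * Real.log ((Y.card : ℝ) / β)⌉)
    (htm : t ≤ m) (hmn : m ≤ n)
    (S : Fin k → Finset (Fin n)) (hcard : ∀ i, (S i).card = m)
    (hcover : ∀ T : Finset (Fin n), T.card ≤ t → ∃ i, T ⊆ S i) :
    ∃ M : (Fin n → Option X) → PMF ℝ,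
      (∀ x : Fin n → Option X, ∀ y ∈ (M x).support, y ∈ Y) ∧
      (∀ x x' : Fin n → Option X,
        (∃ j : Fin n, x j ≠ x' j ∧ (x j = none ∨ x' j = none) ∧
          ∀ j' : Fin n, j' ≠ j → x j' = x' j') →
        ∀ V : Set ℝ,
          (M x).toOuterMeasure V ≤ ENNReal.ofReal (Real.exp ε) * (M x').toOuterMeasure V) ∧
      (∀ x : Fin n → Option X, (∀ j, x j ≠ none) →
        ENNReal.ofReal (1 - β) ≤ (M x).toOuterMeasure
          {y : ℝ |
            y ≤ Finset.univ.sup' ⟨(hcover ∅ (Nat.zero_le t)).choose, Finset.mem_univ _⟩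
                (fun i => f (restrictTuple x (S i)ᶜ)) ∧
            Finset.univ.inf' ⟨(hcover ∅ (Nat.zero_le t)).choose, Finset.mem_univ _⟩
                (fun i => f (restrictTuple x (S i)ᶜ)) ≤ y}) := by
  classical
  have hne : (Finset.univ : Finset (Fin k)).Nonempty :=
    ⟨(hcover ∅ (Nat.zero_le t)).choose, Finset.mem_univ _⟩
  have hc0 : 0 ≤ (⌈2 / ε * Real.log ((Y.card : ℝ) / β)⌉ : ℤ) := by
    have h0 : (0:ℤ) ≤ (t:ℤ) := Int.natCast_nonneg t
    omega
  set τ : ℕ := (⌈2 / ε * Real.log ((Y.card : ℝ) / β)⌉).toNat with hτdef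
  have hτc : (τ : ℤ) = ⌈2 / ε * Real.log ((Y.card : ℝ) / β)⌉ := Int.toNat_of_nonneg hc0
  have ht2 : t = 2 * τ := by omega
  have hcard1 : (1:ℝ) ≤ (Y.card : ℝ) := by exact_mod_cast Finset.card_pos.mpr hY
  have hnum : (Y.card : ℝ) * Real.exp (-(ε/2) * τ) ≤ β := by
    have hceil := Int.le_ceil (2 / ε * Real.log ((Y.card : ℝ) / β))
    have hτr : ((τ : ℕ) : ℝ) = ((⌈2 / ε * Real.log ((Y.card : ℝ) / β)⌉ : ℤ) : ℝ) := by
      exact_mod_cast hτc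
    have hlog : 2 / ε * Real.log ((Y.card : ℝ) / β) ≤ (τ : ℝ) := by
      rw [hτr]; exact hceil
    have hL : Real.log ((Y.card : ℝ) / β) ≤ ε / 2 * τ := by
      have h5 : ε / 2 * (2 / ε * Real.log ((Y.card : ℝ) / β)) ≤ ε / 2 * τ :=
        mul_le_mul_of_nonneg_left hlog (by linarith)
      have h6 : ε / 2 * (2 / ε * Real.log ((Y.card : ℝ) / β))
          = Real.log ((Y.card : ℝ) / β) := by
        field_simp
      linarith
    have h7 : Real.exp (-(ε/2) * τ) ≤ Real.exp (-(Real.log ((Y.card : ℝ) / β))) :=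
      Real.exp_le_exp.mpr (by linarith)
    have h8 : Real.exp (-(Real.log ((Y.card : ℝ) / β))) = β / (Y.card : ℝ) := by
      rw [Real.exp_neg, Real.exp_log (div_pos (by linarith) hβ), inv_div]
    have h9 : (Y.card : ℝ) * Real.exp (-(ε/2) * τ) ≤ (Y.card : ℝ) * (β / (Y.card : ℝ)) :=
      mul_le_mul_of_nonneg_left (by linarith) (by linarith)
    have hc' : (Y.card : ℝ) ≠ 0 := by linarith
    calc (Y.card : ℝ) * Real.exp (-(ε/2) * τ) ≤ (Y.card : ℝ) * (β / (Y.card : ℝ)) := h9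
      _ = β := by field_simp
  obtain ⟨M, h1, h2, h3⟩ := exp_mech Y hY ε β hε.le
      (fun x x' => hdist x x' ≤ 1) (scoreP f S hne τ)
      (fun x x' hN y => ⟨scoreP_sens f S hne τ x x' y hN,
        scoreP_sens f S hne τ x' x y (by rw [hdist_comm]; exact hN)⟩)
      (fun x => {y : ℝ |
        y ≤ Finset.univ.sup' hne (fun i => f (restrictTuple x (S i)ᶜ)) ∧
        Finset.univ.inf' hne (fun i => f (restrictTuple x (S i)ᶜ)) ≤ y})
      τ
      (fun x y hs => by
        obtain ⟨hl, hr⟩ := scoreP_good f S hne τ x y hs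
        exact ⟨hr, hl⟩)
      (scoreP_star Y f hf S hne hcover τ ht2)
      hnum
  refine ⟨M, h1, ?_, fun x _ => h3 x⟩
  intro x x' hxx' V
  refine h2 x x' ?_ V
  obtain ⟨j, hj1, _, hj3⟩ := hxx'
  exact hdist_le_one j hj3
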